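/- Maclaurin's inequality: let 1 ≤ j ≤ k ≤ n and let λ ∈ ℝⁿ satisfy σᵢ(λ) > 0 for all 1 ≤ i ≤ k (i.e. λ lies in the Gårding cone Γₖ). Then (σₖ(λ)/C(n,k))^{1/k} ≤ (σⱼ(λ)/C(n,j))^{1/j}, where C(n,i) is the binomial coefficient and σᵢ is the i-th elementary symmetric polynomial. -/

import Mathlib

open Polynomial Finset

/-- The `i`-th elementary symmetric polynomial of `l : Fin n → ℝ`. -/
noncomputable def esymm (n : ℕ) (i : ℕ) (l : Fin n → ℝ) : ℝ :=
  ∑ s ∈ Finset.univ.powersetCard i, ∏ j ∈ s, l j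

lemma esymm_eq_multiset (n i : ℕ) (l : Fin n → ℝ) :
    esymm n i l = (Finset.univ.val.map l).esymm i := by
  rw [Finset.esymm_map_val]; rfl

/-- normalized symmetric function of a multiset -/
noncomputable def np (s : Multiset ℝ) (i : ℕ) : ℝ :=
  s.esymm i / ((Multiset.card s).choose i)

lemma two_mul_sum_pairs {α : Type*} [DecidableEq α] (u : Finset α) (g : α → ℝ) :
    2 * ∑ s ∈ u.powersetCard 2, ∏ i ∈ s, g i
      = (∑ i ∈ u, g i) ^ 2 - ∑ i ∈ u, g i ^ 2 := by
  induction u using Finset.induction_on with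
  | empty =>
    rw [Finset.powersetCard_eq_empty.mpr (by simp)]
    simp
  | @insert a u ha ih =>
    rw [Finset.powersetCard_succ_insert ha, Finset.sum_union, Finset.sum_image]
    · have h1 : ∀ t ∈ u.powersetCard 1, ∏ i ∈ insert a t, g i = g a * ∏ i ∈ t, g i := by
        intro t ht
        rw [Finset.mem_powersetCard] at ht
        exact Finset.prod_insert (fun hat => ha (ht.1 hat))
      rw [Finset.sum_congr rfl h1, ← Finset.mul_sum]
      have h2 : ∑ t ∈ u.powersetCard 1, ∏ i ∈ t, g i = ∑ i ∈ u, g i := by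
        rw [Finset.powersetCard_one, Finset.sum_map]
        simp
      rw [h2, Finset.sum_insert ha, Finset.sum_insert ha]
      ring_nf
      linarith [ih]
    · -- injectivity of insert a on powersetCard 1 u
      intro t1 ht1 t2 ht2 h
      rw [Finset.mem_coe, Finset.mem_powersetCard] at ht1 ht2
      have e1 : (insert a t1).erase a = t1 := Finset.erase_insert (fun h => ha (ht1.1 h))
      have e2 : (insert a t2).erase a = t2 := Finset.erase_insert (fun h => ha (ht2.1 h))
      rw [← e1, ← e2, h]
    · -- disjoint
      rw [Finset.disjoint_left]
      intro t ht ht2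
      rw [Finset.mem_powersetCard] at ht
      obtain ⟨t', ht', rfl⟩ := Finset.mem_image.mp ht2
      exact ha (ht.1 (Finset.mem_insert_self a t'))

lemma esymm_compl (m i : ℕ) (him : i ≤ m) (f : Fin m → ℝ) :
    esymm m i f = ∑ s ∈ Finset.univ.powersetCard (m - i), ∏ j ∈ Finset.univ \ s, f j := by
  unfold esymm
  apply Finset.sum_nbij' (i := fun s => Finset.univ \ s) (j := fun s => Finset.univ \ s)
  · intro a ha
    rw [Finset.mem_powersetCard] at ha ⊢
    refine ⟨Finset.subset_univ _, ?_⟩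
    rw [Finset.card_sdiff_of_subset (Finset.subset_univ _), ha.2]
    simp
  · intro a ha
    rw [Finset.mem_powersetCard] at ha ⊢
    refine ⟨Finset.subset_univ _, ?_⟩
    rw [Finset.card_sdiff_of_subset (Finset.subset_univ _), ha.2]
    simp [Nat.sub_sub_self him]
  · intro a _
    simp [Finset.sdiff_sdiff_self_left]
  · intro a _
    simp [Finset.sdiff_sdiff_self_left]
  · intro a _
    congr 1
    simp [Finset.sdiff_sdiff_self_left]

lemma newton_base (m : ℕ) (hm : 2 ≤ m) (f : Fin m → ℝ) :
    (m : ℝ) ^ 2 * (2 * (esymm m (m - 2) f * esymm m m f))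
      ≤ (m : ℝ) * ((m : ℝ) - 1) * esymm m (m - 1) f ^ 2 := by
  set q : Fin m → ℝ := fun i => ∏ j ∈ Finset.univ.erase i, f j with hq
  have hA : esymm m (m - 1) f = ∑ i, q i := by
    rw [esymm_compl m (m - 1) (Nat.sub_le _ _) f]
    rw [show m - (m - 1) = 1 by omega]
    rw [Finset.powersetCard_one, Finset.sum_map]
    apply Finset.sum_congr rfl
    intro i _
    congr 1
    ext x
    simp [Finset.mem_erase, and_comm]
  have hprod : esymm m m f = ∏ j, f j := by
    unfold esymm
    have h := Finset.powersetCard_self (Finset.univ : Finset (Fin m))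
    rw [Finset.card_fin] at h
    rw [h, Finset.sum_singleton]
  have hB : esymm m m f * esymm m (m - 2) f = ∑ s ∈ Finset.univ.powersetCard 2, ∏ i ∈ s, q i := by
    rw [esymm_compl m (m - 2) (Nat.sub_le _ _) f, show m - (m - 2) = 2 by omega,
      Finset.mul_sum]
    apply Finset.sum_congr rfl
    intro s hs
    rw [Finset.mem_powersetCard] at hs
    obtain ⟨a, b, hab, rfl⟩ := Finset.card_eq_two.mp hs.2
    have hbu : b ∈ (Finset.univ : Finset (Fin m)).erase a := by simp [hab.symm]
    have hqa : q a = f b * ∏ j ∈ (Finset.univ.erase a).erase b, f j :=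
      (Finset.mul_prod_erase _ f hbu).symm
    have heq : (Finset.univ.erase a).erase b = Finset.univ \ {a, b} := by
      ext x; simp [Finset.mem_erase, and_comm]
    have hqb : q b = f a * ∏ j ∈ (Finset.univ.erase a).erase b, f j := by
      show (∏ j ∈ Finset.univ.erase b, f j) = _
      have hau : a ∈ (Finset.univ : Finset (Fin m)).erase b := by simp [hab]
      have : (Finset.univ.erase b).erase a = (Finset.univ.erase a).erase b := by
        ext x; simp [Finset.mem_erase]; tauto
      rw [← Finset.mul_prod_erase _ f hau, this]
    have hem : ∏ j, f j = f a * (f b * ∏ j ∈ (Finset.univ.erase a).erase b, f j) := by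
      rw [Finset.mul_prod_erase _ f hbu, Finset.mul_prod_erase _ f (Finset.mem_univ a)]
    rw [Finset.prod_pair hab, hprod, hem, hqa, hqb, heq]
    ring
  have hCS : (∑ i, q i) ^ 2 ≤ (m : ℝ) * ∑ i, q i ^ 2 := by
    have := sq_sum_le_card_mul_sum_sq (s := (Finset.univ : Finset (Fin m))) (f := q)
    simpa using this
  have hid : 2 * (esymm m m f * esymm m (m - 2) f) = (∑ i, q i) ^ 2 - ∑ i, q i ^ 2 := by
    rw [hB, two_mul_sum_pairs]
  rw [hA]
  have hm2 : (2 : ℝ) ≤ (m : ℝ) := by exact_mod_cast hm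
  nlinarith [hCS, hid, sq_nonneg (∑ i, q i)]

lemma natDegree_prod_X_add_C (s : Multiset ℝ) :
    (Multiset.map (fun a => X + C a) s).prod.natDegree = Multiset.card s := by
  rw [natDegree_multiset_prod_of_monic (s.map fun a => X + C a)
    (fun p hp => by obtain ⟨b, _, rfl⟩ := Multiset.mem_map.mp hp; exact monic_X_add_C b)]
  simp [Multiset.map_map, Function.comp_def]

lemma exists_derivative (s : Multiset ℝ) (hs : 1 ≤ Multiset.card s) :
    ∃ t : Multiset ℝ, Multiset.card t = Multiset.card s - 1 ∧
      ∀ i ≤ Multiset.card s - 1, np t i = np s i := by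
  classical
  set m := Multiset.card s with hm
  set P : Polynomial ℝ := (s.map fun a => X + C a).prod with hP
  have hmne : (m : ℝ) ≠ 0 := by positivity
  have hPmonic : P.Monic :=
    monic_multiset_prod_of_monic s _ fun a _ => monic_X_add_C a
  have hPdeg : P.natDegree = m := by
    rw [hP, natDegree_prod_X_add_C s, hm]
  have hPeq : P = ((s.map fun a => -a).map fun a => X - C a).prod := by
    rw [hP, Multiset.map_map]
    congr 1
    apply Multiset.map_congr rfl
    intro a _
    simp [sub_neg_eq_add]
  have hProots : P.roots = s.map fun a => -a := by
    rw [hPeq, roots_multiset_prod_X_sub_C]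
  have hProots_card : Multiset.card P.roots = m := by rw [hProots, Multiset.card_map]
  set Q : Polynomial ℝ := derivative P with hQ
  have hQtop : Q.coeff (m - 1) = m := by
    rw [hQ, coeff_derivative, Nat.sub_add_cancel hs]
    rw [← hPdeg, hPmonic.coeff_natDegree, hPdeg]
    have : ((m - 1 : ℕ) : ℝ) = (m : ℝ) - 1 := by
      rw [Nat.cast_sub hs]; norm_num
    rw [this]; ring
  have hQne : Q ≠ 0 := by
    intro h
    rw [h] at hQtop
    simp at hQtop
    exact hmne (by exact_mod_cast hQtop.symm)
  have hQdeg : Q.natDegree = m - 1 := by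
    refine le_antisymm ?_ ?_
    · exact (natDegree_derivative_le P).trans (by rw [hPdeg])
    · exact le_natDegree_of_ne_zero (by rw [hQtop]; exact hmne)
  have hQroots_card : Multiset.card Q.roots = m - 1 := by
    refine le_antisymm ?_ ?_
    · exact (Q.card_roots' ).trans (le_of_eq hQdeg)
    · have := P.card_roots_le_derivative
      rw [hProots_card, ← hQ] at this
      omega
  have hQlead : Q.leadingCoeff = m := by
    rw [Polynomial.leadingCoeff, hQdeg, hQtop]
  set R : Polynomial ℝ := C ((m : ℝ)⁻¹) * Q with hR
  have hinv : ((m : ℝ)⁻¹) ≠ 0 := inv_ne_zero hmne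
  have hRmonic : R.Monic := by
    unfold Polynomial.Monic
    rw [hR, leadingCoeff_mul, leadingCoeff_C, hQlead]
    exact inv_mul_cancel₀ hmne
  have hRroots : R.roots = Q.roots := roots_C_mul Q hinv
  have hRdeg : R.natDegree = m - 1 := by rw [hR, natDegree_C_mul hinv, hQdeg]
  have hRfact : (R.roots.map fun a => X - C a).prod = R :=
    prod_multiset_X_sub_C_of_monic_of_roots_card_eq hRmonic
      (by rw [hRroots, hQroots_card, hRdeg])
  refine ⟨R.roots.map fun a => -a, by rw [Multiset.card_map, hRroots, hQroots_card], ?_⟩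
  set t : Multiset ℝ := R.roots.map fun a => -a with ht
  have htcard : Multiset.card t = m - 1 := by
    rw [ht, Multiset.card_map, hRroots, hQroots_card]
  have htprod : (t.map fun a => X + C a).prod = R := by
    have hmapeq : Multiset.map ((fun a => X + C a) ∘ fun a => -a) R.roots
        = Multiset.map (fun a => X - C a) R.roots :=
      Multiset.map_congr rfl (fun a _ => by simp [Function.comp, sub_eq_add_neg])
    rw [ht, Multiset.map_map, hmapeq, hRfact]
  intro i hi
  -- esymm of t
  have h1 : t.esymm i = R.coeff (m - 1 - i) := by
    have hk : m - 1 - i ≤ Multiset.card t := by omega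
    have := Multiset.prod_X_add_C_coeff t hk
    rw [htprod] at this
    rw [htcard] at this
    rw [show m - 1 - (m - 1 - i) = i by omega] at this
    exact this.symm
  have h2 : P.coeff (m - i) = s.esymm i := by
    have hk : m - i ≤ Multiset.card s := by omega
    have := Multiset.prod_X_add_C_coeff s hk
    rw [← hm, show m - (m - i) = i by omega] at this
    exact this
  have h3 : t.esymm i = (m : ℝ)⁻¹ * (s.esymm i * ((m - i : ℕ) : ℝ)) := by
    rw [h1, hR, coeff_C_mul, hQ, coeff_derivative,
      show m - 1 - i + 1 = m - i by omega, h2]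
    have h5 : ((m - 1 - i : ℕ) : ℝ) + 1 = ((m - i : ℕ) : ℝ) := by
      have h6 : m - 1 - i + 1 = m - i := by omega
      exact_mod_cast congrArg (Nat.cast : ℕ → ℝ) h6
    rw [h5]
  -- choose identity
  have hnat : m * (m - 1).choose i = m.choose i * (m - i) := by
    have h4 : m * (m-1).choose i = m.choose (i+1) * (i+1) := by
      have := Nat.add_one_mul_choose_eq (m - 1) i
      rwa [Nat.sub_add_cancel hs] at this
    rw [h4, Nat.choose_succ_right_eq]
  have hc1 : (((m - 1).choose i : ℕ) : ℝ) ≠ 0 := by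
    have := Nat.choose_pos hi
    positivity
  have hc2 : ((m.choose i : ℕ) : ℝ) ≠ 0 := by
    have := Nat.choose_pos (show i ≤ m by omega)
    positivity
  have hnatR : (m : ℝ) * (((m - 1).choose i : ℕ) : ℝ)
      = ((m.choose i : ℕ) : ℝ) * ((m - i : ℕ) : ℝ) := by
    exact_mod_cast congrArg (Nat.cast : ℕ → ℝ) hnat
  rw [np, np, h3, htcard, ← hm]
  field_simp
  linear_combination (s.esymm i) * hnatR.symm

lemma exists_tuple (m : ℕ) (s : Multiset ℝ) (h : Multiset.card s = m) :
    ∃ f : Fin m → ℝ, Finset.univ.val.map f = s := by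
  obtain ⟨L, rfl⟩ := Quotient.exists_rep s
  have hL : L.length = m := by simpa using h
  subst hL
  refine ⟨L.get, ?_⟩
  rw [Fin.univ_def]
  show Multiset.map L.get ↑(List.finRange L.length) = _
  rw [Multiset.map_coe]
  congr 1
  rw [← List.ofFn_eq_map, List.ofFn_get]

lemma newton_aux : ∀ (nn : ℕ) (s : Multiset ℝ), Multiset.card s = nn →
    ∀ i : ℕ, 1 ≤ i → i + 1 ≤ nn → np s (i - 1) * np s (i + 1) ≤ np s i ^ 2 := by
  intro nn
  induction nn with
  | zero => intro s h i h1 h2; omega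
  | succ n ih =>
    intro s hcard i h1 h2
    by_cases hcase : i + 1 = n + 1
    · -- base case : card s = i + 1
      have hcard' : Multiset.card s = i + 1 := by omega
      obtain ⟨f, hf⟩ := exists_tuple (i + 1) s hcard'
      have hes : ∀ jj, s.esymm jj = esymm (i + 1) jj f := by
        intro jj; rw [← hf, ← esymm_eq_multiset]
      rw [np, np, np, hcard', hes, hes, hes]
      have hb := newton_base (i + 1) (by omega) f
      rw [show i + 1 - 2 = i - 1 by omega, show i + 1 - 1 = i by omega] at hb
      push_cast at hb
      have hA : (((i+1).choose (i+1) : ℕ) : ℝ) = 1 := by rw [Nat.choose_self]; norm_num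
      have hB : (((i+1).choose i : ℕ) : ℝ) = (i : ℝ) + 1 := by
        rw [Nat.choose_succ_self_right]; push_cast; ring
      have hC : ((i+1).choose (i-1)) = ((i+1).choose 2) := by
        have := Nat.choose_symm (show 2 ≤ i + 1 by omega) (n := i+1)
        rwa [show i + 1 - 2 = i - 1 by omega] at this
      have hD : (((i+1).choose 2 : ℕ) : ℝ) * 2 = ((i : ℝ) + 1) * i := by
        have h5 := Nat.choose_succ_right_eq (i+1) 1
        rw [Nat.choose_one_right, Nat.add_sub_cancel] at h5
        exact_mod_cast congrArg (Nat.cast : ℕ → ℝ) h5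
      have hc2pos : (0:ℝ) < (((i+1).choose 2 : ℕ) : ℝ) := by
        have := Nat.choose_pos (show 2 ≤ i + 1 by omega)
        positivity
      rw [hC, hA, hB]
      rw [div_pow, div_mul_div_comm, div_le_div_iff₀ (by positivity) (by positivity)]
      nlinarith [hb, hD, sq_nonneg (esymm (i+1) i f)]
    · -- inductive step
      have h3 : i + 1 ≤ n := by omega
      obtain ⟨t, htc, hnp⟩ := exists_derivative s (by omega)
      rw [hcard, Nat.add_sub_cancel] at htc hnp
      rw [← hnp (i-1) (by omega), ← hnp i (by omega), ← hnp (i+1) (by omega)]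
      exact ih t htc i h1 h3

theorem maclaurin_inequality (n j k : ℕ) (hj : 1 ≤ j) (hjk : j ≤ k) (hkn : k ≤ n)
    (l : Fin n → ℝ) (hl : ∀ i : ℕ, 1 ≤ i → i ≤ k → 0 < esymm n i l) :
    (esymm n k l / (n.choose k)) ^ ((1 : ℝ) / k) ≤
      (esymm n j l / (n.choose j)) ^ ((1 : ℝ) / j) := by
  set p : ℕ → ℝ := fun i => esymm n i l / (n.choose i) with hp
  have hcard : Multiset.card (Finset.univ.val.map l) = n := by
    rw [Multiset.card_map]; exact Finset.card_fin n
  have hnp : ∀ i, np (Finset.univ.val.map l) i = p i := by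
    intro i; rw [np, hcard, ← esymm_eq_multiset]
  have hNewton : ∀ i : ℕ, 1 ≤ i → i + 1 ≤ n → p (i-1) * p (i+1) ≤ p i ^ 2 := by
    intro i h1 h2
    rw [← hnp, ← hnp, ← hnp]
    exact newton_aux n _ hcard i h1 h2
  have hp0 : p 0 = 1 := by
    have h0 : esymm n 0 l = 1 := by
      unfold esymm
      rw [Finset.powersetCard_zero, Finset.sum_singleton, Finset.prod_empty]
    simp [hp, h0]
  have hpos : ∀ i, 1 ≤ i → i ≤ k → 0 < p i := by
    intro i h1 h2
    apply div_pos (hl i h1 h2)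
    exact_mod_cast Nat.choose_pos (le_trans h2 hkn)
  have hA : ∀ i : ℕ, 1 ≤ i → i + 1 ≤ k → p (i+1) ^ i ≤ p i ^ (i+1) := by
    intro i
    induction i with
    | zero => intro h _; exact absurd h (by omega)
    | succ m ihm =>
      intro h1 h2
      by_cases hm : m = 0
      · subst hm
        have hN := hNewton 1 (by omega) (by omega)
        rw [hp0, one_mul] at hN
        simpa using hN
      · have h1m : 1 ≤ m := by omega
        have ihv := ihm h1m (by omega)
        have hN := hNewton (m+1) (by omega) (by omega)
        rw [show m + 1 - 1 = m by omega] at hN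
        have hpos1 : 0 < p (m+1) := hpos _ (by omega) (by omega)
        have hpos2 : 0 < p (m+1+1) := hpos _ (by omega) (by omega)
        have hposm : 0 < p m := hpos _ h1m (by omega)
        have step1 : (p m * p (m+1+1))^(m+1) ≤ (p (m+1)^2)^(m+1) :=
          pow_le_pow_left₀ (by positivity) hN (m+1)
        rw [mul_pow, ← pow_mul] at step1
        have step2 : p (m+1)^m * p (m+1+1)^(m+1) ≤ p m ^ (m+1) * p (m+1+1)^(m+1) :=
          mul_le_mul_of_nonneg_right ihv (by positivity)
        have step3 : p (m+1)^m * p (m+1+1)^(m+1) ≤ p (m+1)^(2*(m+1)) := le_trans step2 step1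
        have step4 : p (m+1)^(2*(m+1)) = p (m+1)^m * p (m+1)^(m+1+1) := by
          rw [← pow_add]; congr 1; ring
        rw [step4] at step3
        exact (mul_le_mul_iff_right₀ (pow_pos hpos1 m)).mp step3
  have hB : ∀ m, j ≤ m → m ≤ k → p m ^ j ≤ p j ^ m := by
    intro m hjm
    induction m, hjm using Nat.le_induction with
    | base => intro _; exact le_refl _
    | succ m hjm ihm =>
      intro hmk
      have ihv := ihm (by omega)
      have hAv := hA m (by omega) (by omega)
      have hposj := hpos j hj (by omega)
      have hposm := hpos m (by omega) (by omega)
      have hposm1 := hpos (m+1) (by omega) hmk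
      have key : (p (m+1) ^ j) ^ m ≤ (p j ^ (m+1)) ^ m := by
        calc (p (m+1) ^ j) ^ m = (p (m+1) ^ m) ^ j := by
              rw [← pow_mul, ← pow_mul, Nat.mul_comm]
        _ ≤ (p m ^ (m+1)) ^ j := pow_le_pow_left₀ (by positivity) hAv j
        _ = (p m ^ j) ^ (m+1) := by rw [← pow_mul, ← pow_mul, Nat.mul_comm]
        _ ≤ (p j ^ m) ^ (m+1) := pow_le_pow_left₀ (by positivity) ihv (m+1)
        _ = (p j ^ (m+1)) ^ m := by rw [← pow_mul, ← pow_mul, Nat.mul_comm]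
      exact (pow_le_pow_iff_left₀ (by positivity) (by positivity) (by omega)).mp key
  have hkj : p k ^ j ≤ p j ^ k := hB k hjk le_rfl
  have hposj := hpos j hj hjk
  have hposk := hpos k (le_trans hj hjk) le_rfl
  have hjne : (j:ℝ) ≠ 0 := by positivity
  have hkne : (k:ℝ) ≠ 0 := by
    have : 1 ≤ k := le_trans hj hjk
    positivity
  have h1 : ((p k ^ j : ℝ)) ^ ((1:ℝ)/((j:ℝ)*(k:ℝ))) = (p k) ^ ((1:ℝ)/(k:ℝ)) := by
    rw [← Real.rpow_natCast (p k) j, ← Real.rpow_mul hposk.le]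
    congr 1
    field_simp
  have h2 : ((p j ^ k : ℝ)) ^ ((1:ℝ)/((j:ℝ)*(k:ℝ))) = (p j) ^ ((1:ℝ)/(j:ℝ)) := by
    rw [← Real.rpow_natCast (p j) k, ← Real.rpow_mul hposj.le]
    congr 1
    field_simp
  rw [← h1, ← h2]
  exact Real.rpow_le_rpow (by positivity) hkj (by positivity)
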